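/- arXiv:math/9710218 — 2 statements merged into one kernel-verified Lean document; each statement's English description precedes it below -/
import Mathlib

section
/- Let $\kappa = \mu^+ = \kappa^{<\kappa}$ be an uncountable successor cardinal, and fix injections $F_i : {}^{i}2 \to \kappa$ for $i < \kappa$; write $\overline{F} \circ \eta$ for the function $i \mapsto F_i(\eta \upharpoonright i)$. Then $A \subseteq {}^{\kappa}2$ has strong measure zero if and only if for every $X \subseteq \kappa$ of cardinality $\kappa$ there is $f \in {}^{X}\kappa$ such that for every $\eta \in A$, the set $\{i \in X : f(i) \geq F_i(\eta \upharpoonright i)\}$ has cardinality $\kappa$. -/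
open Cardinal Set

noncomputable section

/-- The basic open set `[ν]` determined by a pattern `ν` of length `β`:
all `η` agreeing with `ν` below `β`. -/
def cyl (β : Ordinal.{0}) (ν : Ordinal.{0} → Bool) : Set (Ordinal.{0} → Bool) :=
  {η | ∀ i < β, η i = ν i}

/-- `A` is nowhere dense in `^κ2`: every `ν ∈ ^{<κ}2` has an extension `η`
whose basic open set avoids `A`. -/
def Nwd (κ : Cardinal.{0}) (A : Set (Ordinal.{0} → Bool)) : Prop :=
  ∀ β < κ.ord, ∀ ν : Ordinal.{0} → Bool,
    ∃ γ, γ < κ.ord ∧ β ≤ γ ∧ ∃ η : Ordinal.{0} → Bool,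
      (∀ i < β, η i = ν i) ∧ cyl γ η ∩ A = ∅

/-- `A` is meager in `^κ2`: covered by a union of `κ` many nowhere dense sets. -/
def MeagerB (κ : Cardinal.{0}) (A : Set (Ordinal.{0} → Bool)) : Prop :=
  ∃ R : Ordinal.{0} → Set (Ordinal.{0} → Bool),
    (∀ ξ < κ.ord, Nwd κ (R ξ)) ∧ A ⊆ ⋃ ξ ∈ Set.Iio κ.ord, R ξ

/-- `A` is open in the bounded topology on `^κ2`. -/
def IsOpenB (κ : Cardinal.{0}) (A : Set (Ordinal.{0} → Bool)) : Prop :=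
  ∀ η ∈ A, ∃ i < κ.ord, cyl i η ⊆ A

/-- `C` is a closed unbounded subset of (the ordinals below) `o`. -/
def ClubIn (o : Ordinal.{0}) (C : Set Ordinal.{0}) : Prop :=
  C ⊆ Set.Iio o ∧ (∀ β < o, ∃ γ ∈ C, β ≤ γ) ∧
    (∀ S : Set Ordinal.{0}, S ⊆ C → S.Nonempty → sSup S < o → sSup S ∈ C)

/-- CUB: the set of `η ∈ ^κ2` taking value 1 on some club of `κ`. -/
def CUB (κ : Cardinal.{0}) : Set (Ordinal.{0} → Bool) :=
  {η | ∃ C : Set Ordinal.{0}, ClubIn κ.ord C ∧ ∀ i ∈ C, η i = true}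

/-- `A ⊆ ^κ2` has strong measure zero. -/
def SMZ (κ : Cardinal.{0}) (A : Set (Ordinal.{0} → Bool)) : Prop :=
  ∀ X : Set Ordinal.{0}, X ⊆ Set.Iio κ.ord → #X = Cardinal.lift.{1} κ →
    ∃ f : Ordinal.{0} → (Ordinal.{0} → Bool), A ⊆ ⋃ ξ ∈ X, cyl ξ (f ξ)

/-- `f <*_κ g` on the index set `X`: `|{i ∈ X : f i ≥ g i}| < κ`. -/
def LtStarOn (κ : Cardinal.{0}) (X : Set Ordinal.{0}) (f g : Ordinal.{0} → Ordinal.{0}) : Prop :=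
  #{i : Ordinal | i ∈ X ∧ g i ≤ f i} < Cardinal.lift.{1} κ

/-- `f <*_κ g` on all of `κ`. -/
def LtStar (κ : Cardinal.{0}) (f g : Ordinal.{0} → Ordinal.{0}) : Prop :=
  LtStarOn κ (Set.Iio κ.ord) f g

/-- `f` maps ordinals below `κ` to ordinals below `κ`, i.e. `f ∈ ^κκ`. -/
def IntoKappa (κ : Cardinal.{0}) (f : Ordinal.{0} → Ordinal.{0}) : Prop :=
  ∀ i < κ.ord, f i < κ.ord

/-- `F ⊆ ^κκ` is `<*`-bounded. -/
def BoundedFam (κ : Cardinal.{0}) (F : Set (Ordinal.{0} → Ordinal.{0})) : Prop :=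
  ∃ g, IntoKappa κ g ∧ ∀ f ∈ F, LtStar κ f g

/-- `F ⊆ ^κκ` is dominating. -/
def DominatingFam (κ : Cardinal.{0}) (F : Set (Ordinal.{0} → Ordinal.{0})) : Prop :=
  ∀ g, IntoKappa κ g → ∃ f ∈ F, LtStar κ g f

/-- A coding family: for each `i < κ`, `F i` is an injection of `^i2` into `κ`
(it depends only on, and is injective on, restrictions to `i`). -/
def CodingOK (κ : Cardinal.{0}) (F : Ordinal.{0} → (Ordinal.{0} → Bool) → Ordinal.{0}) : Prop :=
  (∀ i < κ.ord, ∀ ν : Ordinal.{0} → Bool, F i ν < κ.ord) ∧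
  (∀ i : Ordinal.{0}, ∀ ν ν' : Ordinal.{0} → Bool, (∀ j < i, ν j = ν' j) → F i ν = F i ν') ∧
  (∀ i < κ.ord, ∀ ν ν' : Ordinal.{0} → Bool, F i ν = F i ν' → ∀ j < i, ν j = ν' j)

/-- `g` (restricted to domain `β`) is a strictly increasing continuous sequence
of ordinals below `κ`. -/
def SIC (κ : Cardinal.{0}) (β : Ordinal.{0}) (g : Ordinal.{0} → Ordinal.{0}) : Prop :=
  (∀ i < β, g i < κ.ord) ∧
  (∀ i j, i < j → j < β → g i < g j) ∧
  (∀ δ, δ < β → Order.IsSuccLimit δ → g δ = sSup (g '' Set.Iio δ))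

/-- The open sets `A_ν` of the generalized Souslin representation of CUB:
if `ν` (of length `β`) is strictly increasing and continuous then
`A_ν = {η : ∀ i ∈ dom ν, η (ν i) = 1}`, and `A_ν = ∅` otherwise. -/
def ANu (κ : Cardinal.{0}) (β : Ordinal.{0}) (g : Ordinal.{0} → Ordinal.{0}) : Set (Ordinal.{0} → Bool) :=
  {η | SIC κ β g ∧ ∀ i < β, η (g i) = true}

/-- The property of Baire in `^κ2` with the bounded topology. -/
def BaireProp (κ : Cardinal.{0}) (A : Set (Ordinal.{0} → Bool)) : Prop :=
  ∃ O, IsOpenB κ O ∧ MeagerB κ ((O \ A) ∪ (A \ O))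


section Helpers

/-- An unbounded subset of `Iio κ.ord` has cardinality `κ` when `κ` is regular. -/
private lemma mk_of_unbounded {κ : Cardinal.{0}} (hreg : κ.IsRegular) {S : Set Ordinal.{0}}
    (hS : S ⊆ Set.Iio κ.ord) (hub : ∀ β < κ.ord, ∃ ξ ∈ S, β ≤ ξ) :
    #S = Cardinal.lift.{1} κ := by
  have hle : #S ≤ Cardinal.lift.{1} κ := by
    calc #S ≤ #(Set.Iio κ.ord) := Cardinal.mk_le_mk_of_subset hS
      _ = Cardinal.lift.{1} κ := by rw [Ordinal.mk_Iio_ordinal, Cardinal.card_ord]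
  refine le_antisymm hle ?_
  by_contra hlt
  rw [not_le] at hlt
  haveI : Small.{0} S := small_subset hS
  set G : Shrink.{0} S → Ordinal.{0} := fun p => ((equivShrink S).symm p : Ordinal) with hG
  have hGlt : ∀ p, G p < κ.ord := fun p => hS ((equivShrink S).symm p).2
  have hcard : #(Shrink.{0} S) < κ.ord.cof := by
    rw [hreg.cof_eq, ← Cardinal.lift_lt.{0,1}, Cardinal.lift_mk_shrink''.{1,0}]
    exact hlt
  have hsup := Ordinal.iSup_lt_ord hcard hGlt
  have hlim : Order.IsSuccLimit κ.ord := Cardinal.isSuccLimit_ord hreg.aleph0_le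
  obtain ⟨ξ, hξS, hξ⟩ := hub (Order.succ (iSup G)) (hlim.succ_lt hsup)
  have hξle : ξ ≤ iSup G := by
    have h1 : G (equivShrink S ⟨ξ, hξS⟩) = ξ := by simp [hG]
    rw [← h1]; exact Ordinal.le_iSup G _
  exact (Order.succ_le_iff.mp (hξ.trans hξle)).false

/-- Tails of a set of size `κ` have size `κ`. -/
private lemma mk_tail {κ : Cardinal.{0}} (hreg : κ.IsRegular) {X : Set Ordinal.{0}}
    (hX : X ⊆ Set.Iio κ.ord) (hXc : #X = Cardinal.lift.{1} κ) {β : Ordinal.{0}}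
    (hβ : β < κ.ord) : #(X ∩ Set.Ici β : Set Ordinal.{0}) = Cardinal.lift.{1} κ := by
  refine le_antisymm (hXc ▸ Cardinal.mk_le_mk_of_subset inter_subset_left) ?_
  by_contra h
  rw [not_le] at h
  have h1 : #(X ∩ Set.Iio β : Set Ordinal.{0}) < Cardinal.lift.{1} κ := by
    calc #(X ∩ Set.Iio β : Set Ordinal.{0}) ≤ #(Set.Iio β) :=
          Cardinal.mk_le_mk_of_subset inter_subset_right
      _ = Cardinal.lift.{1} β.card := Ordinal.mk_Iio_ordinal β
      _ < Cardinal.lift.{1} κ := by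
          rw [Cardinal.lift_lt]; exact Cardinal.lt_ord.mp hβ
  have h2 : #X ≤ #(X ∩ Set.Ici β : Set Ordinal.{0}) + #(X ∩ Set.Iio β : Set Ordinal.{0}) := by
    refine (Cardinal.mk_le_mk_of_subset ?_).trans (Cardinal.mk_union_le _ _)
    intro ξ hξ
    by_cases hb : β ≤ ξ
    · exact Or.inl ⟨hξ, hb⟩
    · exact Or.inr ⟨hξ, lt_of_not_ge hb⟩
  rw [hXc] at h2
  have haleph : ℵ₀ ≤ Cardinal.lift.{1} κ := Cardinal.aleph0_le_lift.mpr hreg.aleph0_le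
  exact (h2.trans_lt (Cardinal.add_lt_of_lt haleph h h1)).false

/-- If `a.card ≤ b.card` then `Iio a` is covered by an `Iio b`-indexed family. -/
private lemma exists_surj (a b : Ordinal.{0}) (h : a.card ≤ b.card) :
    ∃ e : Ordinal.{0} → Ordinal.{0}, ∀ β < a, ∃ α < b, e α = β := by
  classical
  have hc : #(Set.Iio a) ≤ #(Set.Iio b) := by
    rw [Ordinal.mk_Iio_ordinal, Ordinal.mk_Iio_ordinal]
    exact Cardinal.lift_le.mpr h
  obtain ⟨emb⟩ := Cardinal.le_def _ _ |>.mp hc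
  refine ⟨fun α => if h : ∃ p : Set.Iio a, (emb p : Ordinal) = α
      then (h.choose : Ordinal) else 0, ?_⟩
  intro β hβ
  refine ⟨emb ⟨β, hβ⟩, (emb ⟨β, hβ⟩).2, ?_⟩
  have hex : ∃ p : Set.Iio a, (emb p : Ordinal) = (emb ⟨β, hβ⟩ : Ordinal) := ⟨⟨β, hβ⟩, rfl⟩
  show (if h : ∃ p : Set.Iio a, (emb p : Ordinal) = (emb ⟨β, hβ⟩ : Ordinal)
      then (h.choose : Ordinal) else 0) = β
  rw [dif_pos hex]
  have h2 : hex.choose = ⟨β, hβ⟩ := emb.injective (Subtype.ext hex.choose_spec)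
  rw [h2]

/-- Uniqueness of ordinal division/remainder. -/
private lemma div_mod_unique {m t α : Ordinal.{0}} (hm : m ≠ 0) (hα : α < m) :
    (m * t + α) / m = t ∧ (m * t + α) % m = α := by
  have hdiv : (m * t + α) / m = t := by
    rw [Ordinal.mul_add_div t hm α, Ordinal.div_eq_zero_of_lt hα, add_zero]
  refine ⟨hdiv, ?_⟩
  have hmod := Ordinal.div_add_mod (m * t + α) m
  rw [hdiv] at hmod
  exact add_left_cancel_iff.mp hmod

end Helpers

/-- for `κ = μ⁺ = κ^{<κ}` and fixed injections `F_i : ^i2 → κ`,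
`A ⊆ ^κ2` has strong measure zero iff for every `X ⊆ κ` of cardinality `κ`
there is `f ∈ ^Xκ` such that for every `η ∈ A`, the set
`{i ∈ X : f i ≥ F_i (η ↾ i)}` has cardinality `κ`. -/
theorem smz_iff_not_dominating (κ μ : Cardinal.{0}) (hμ : κ = Order.succ μ)
    (hκ : ℵ₀ < κ) (hpow : κ ^< κ = κ)
    (F : Ordinal.{0} → (Ordinal.{0} → Bool) → Ordinal.{0}) (hF : CodingOK κ F)
    (A : Set (Ordinal.{0} → Bool)) :
    SMZ κ A ↔
      ∀ X : Set Ordinal.{0}, X ⊆ Set.Iio κ.ord → #X = Cardinal.lift.{1} κ →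
        ∃ f : Ordinal.{0} → Ordinal.{0}, IntoKappa κ f ∧
          ∀ η ∈ A, #{i : Ordinal.{0} | i ∈ X ∧ F i η ≤ f i} = Cardinal.lift.{1} κ := by
  classical
  have haμ : ℵ₀ ≤ μ := by rw [hμ] at hκ; exact Order.lt_succ_iff.mp hκ
  have hreg : κ.IsRegular := hμ ▸ Cardinal.isRegular_succ haμ
  have hord : Order.IsSuccLimit κ.ord := Cardinal.isSuccLimit_ord hreg.aleph0_le
  constructor
  · -- SMZ → dominating-style statement
    intro hSMZ X hX hXc
    have hGex : ∀ β, β < κ.ord →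
        ∃ g : Ordinal.{0} → (Ordinal.{0} → Bool),
          A ⊆ ⋃ ξ ∈ (X ∩ Set.Ici β : Set Ordinal.{0}), cyl ξ (g ξ) :=
      fun β hβ => hSMZ _ (fun ξ hξ => hX hξ.1) (mk_tail hreg hX hXc hβ)
    choose G hG using hGex
    set G' : Ordinal.{0} → Ordinal.{0} → (Ordinal.{0} → Bool) :=
      fun β => if h : β < κ.ord then G β h else fun _ _ => false with hG'
    set f : Ordinal.{0} → Ordinal.{0} := fun i =>
      ⨆ p : Shrink.{0} (Set.Iic i : Set Ordinal.{0}),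
        F i (G' (((equivShrink (Set.Iic i : Set Ordinal.{0})).symm p : Set.Iic i) : Ordinal) i)
      with hf
    refine ⟨f, ?_, ?_⟩
    · intro i hi
      refine Ordinal.iSup_lt_ord ?_ fun p => hF.1 i hi _
      rw [hreg.cof_eq, ← Cardinal.lift_lt.{0,1}, Cardinal.lift_mk_shrink''.{1,0}]
      have hIic : (Set.Iic i : Set Ordinal.{0}) = Set.Iio (i + 1) := by
        ext j
        simp [Order.lt_add_one_iff]
      rw [hIic, Ordinal.mk_Iio_ordinal, Cardinal.lift_lt, ← Cardinal.lt_ord,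
        Ordinal.add_one_eq_succ]
      exact hord.succ_lt hi
    · intro η hη
      refine mk_of_unbounded hreg (fun i hi => hX hi.1) ?_
      intro β hβ
      have hmem := hG β hβ hη
      rw [Set.mem_iUnion₂] at hmem
      obtain ⟨ξ, hξ, hcyl⟩ := hmem
      refine ⟨ξ, ⟨hξ.1, ?_⟩, hξ.2⟩
      have heq : F ξ η = F ξ (G β hβ ξ) := hF.2.1 ξ η (G β hβ ξ) fun j hj => hcyl j hj
      rw [heq]
      have hGG : G' β = G β hβ := dif_pos hβ
      have hle : F ξ (G' β ξ) ≤ f ξ := by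
        have hb : β ∈ (Set.Iic ξ : Set Ordinal.{0}) := hξ.2
        have h1 := Ordinal.le_iSup
          (fun p : Shrink.{0} (Set.Iic ξ : Set Ordinal.{0}) =>
            F ξ (G' (((equivShrink (Set.Iic ξ : Set Ordinal.{0})).symm p : Set.Iic ξ) : Ordinal) ξ))
          (equivShrink (Set.Iic ξ : Set Ordinal.{0}) ⟨β, hb⟩)
        simpa using h1
      rwa [hGG] at hle
  · -- dominating-style statement → SMZ
    intro H X hX hXc
    have hμκ : μ < κ := hμ ▸ Order.lt_succ μ
    have hμ0 : μ.ord ≠ 0 := by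
      rw [ne_eq, Cardinal.ord_eq_zero]
      exact (Cardinal.aleph0_pos.trans_le haμ).ne'
    set Y : Set Ordinal.{0} := X ∪ Set.Ici κ.ord with hYdef
    have hYub : ¬ BddAbove Y := by
      rintro ⟨b, hb⟩
      have hmem : max (b + 1) κ.ord ∈ Y := Or.inr (Set.mem_Ici.mpr (le_max_right _ _))
      have h2 : b + 1 ≤ b := le_trans (le_max_left _ _) (hb hmem)
      rw [Ordinal.add_one_eq_succ] at h2
      exact (Order.succ_le_iff.mp h2).false
    set x : Ordinal.{0} → Ordinal.{0} := Ordinal.enumOrd Y with hxdef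
    have hxmono : StrictMono x := Ordinal.enumOrd_strictMono hYub
    have hxX : ∀ s < κ.ord, x s ∈ X := by
      intro s hs
      rcases Ordinal.enumOrd_mem hYub s with h | h
      · exact h
      · exfalso
        have himg : X ⊆ x '' Set.Iio s := by
          intro ξ hξ
          obtain ⟨s', hs'⟩ := Ordinal.enumOrd_surjective hYub (Or.inl hξ : ξ ∈ Y)
          have hlt : x s' < x s := by
            show Ordinal.enumOrd Y s' < Ordinal.enumOrd Y s
            rw [hs']
            exact lt_of_lt_of_le (hX hξ) h
          exact ⟨s', hxmono.lt_iff_lt.mp hlt, hs'⟩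
        have hc1 : Cardinal.lift.{1} κ ≤ #(x '' Set.Iio s) :=
          hXc ▸ Cardinal.mk_le_mk_of_subset himg
        have hc2 : #(x '' Set.Iio s) ≤ #(Set.Iio s) := Cardinal.mk_image_le
        have hc3 : #(Set.Iio s) < Cardinal.lift.{1} κ := by
          rw [Ordinal.mk_Iio_ordinal, Cardinal.lift_lt]
          exact Cardinal.lt_ord.mp hs
        exact ((hc1.trans hc2).trans_lt hc3).false
    have hmul : ∀ t < κ.ord, μ.ord * (t + 1) < κ.ord := by
      intro t ht
      rw [Cardinal.lt_ord, Ordinal.card_mul, Cardinal.card_ord]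
      refine Cardinal.mul_lt_of_lt hreg.aleph0_le hμκ ?_
      rw [← Cardinal.lt_ord, Ordinal.add_one_eq_succ]
      exact hord.succ_lt ht
    set X' : Set Ordinal.{0} := (fun t => x (μ.ord * (t + 1))) '' Set.Iio κ.ord with hX'def
    have hX'sub : X' ⊆ Set.Iio κ.ord := by
      rintro i ⟨t, ht, rfl⟩
      exact hX (hxX _ (hmul t ht))
    have hX'card : #X' = Cardinal.lift.{1} κ := by
      have hinj : Set.InjOn (fun t => x (μ.ord * (t + 1))) (Set.Iio κ.ord) := by
        intro a _ b _ hab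
        have h1 : μ.ord * (a + 1) = μ.ord * (b + 1) := hxmono.injective hab
        have hmpos : (0 : Ordinal.{0}) < μ.ord := pos_iff_ne_zero.mpr hμ0
        rcases lt_trichotomy a b with h | h | h
        · exact absurd h1 (ne_of_lt (mul_lt_mul_of_pos_left
            (by simpa using Order.succ_lt_succ h) hmpos))
        · exact h
        · exact absurd h1.symm (ne_of_lt (mul_lt_mul_of_pos_left
            (by simpa using Order.succ_lt_succ h) hmpos))
      rw [hX'def, Cardinal.mk_image_eq_of_injOn _ _ hinj, Ordinal.mk_Iio_ordinal,
        Cardinal.card_ord]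
    obtain ⟨f, hfK, hfA⟩ := H X' hX'sub hX'card
    -- candidate chooser
    set V : Ordinal.{0} → Ordinal.{0} → (Ordinal.{0} → Bool) := fun i β =>
      if h : ∃ w : Ordinal.{0} → Bool, F i w = β then h.choose else fun _ => false with hVdef
    have hV : ∀ i β, (∃ w, F i w = β) → F i (V i β) = β := by
      intro i β h
      show F i (if h : ∃ w : Ordinal.{0} → Bool, F i w = β then h.choose else fun _ => false) = β
      rw [dif_pos h]
      exact h.choose_spec
    -- index chooser
    have hEex : ∀ i : Ordinal.{0}, i < κ.ord →
        ∃ e : Ordinal.{0} → Ordinal.{0}, ∀ β < f i + 1, ∃ α < μ.ord, e α = β := by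
      intro i hi
      apply exists_surj
      rw [Cardinal.card_ord]
      have h1 : f i + 1 < κ.ord := by
        rw [Ordinal.add_one_eq_succ]; exact hord.succ_lt (hfK i hi)
      have h2 := Cardinal.lt_ord.mp h1
      rw [hμ] at h2
      exact Order.lt_succ_iff.mp h2
    choose E hE using hEex
    set E' : Ordinal.{0} → Ordinal.{0} → Ordinal.{0} :=
      fun i => if h : i < κ.ord then E i h else id with hE'def
    refine ⟨fun ξ => if h : ∃ s, s < κ.ord ∧ x s = ξ then
        V (x (μ.ord * (h.choose / μ.ord + 1)))
          (E' (x (μ.ord * (h.choose / μ.ord + 1))) (h.choose % μ.ord))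
      else fun _ => false, ?_⟩
    intro η hη
    have hne : {i : Ordinal.{0} | i ∈ X' ∧ F i η ≤ f i}.Nonempty := by
      rw [← Set.nonempty_coe_sort, ← Cardinal.mk_ne_zero_iff, hfA η hη]
      simp [Cardinal.lift_eq_zero]
      exact (Cardinal.aleph0_pos.trans hκ).ne'
    obtain ⟨i, hiX', hile⟩ := hne
    obtain ⟨t, ht, rfl⟩ := hiX'
    have hiκ : x (μ.ord * (t + 1)) < κ.ord := hX (hxX _ (hmul t ht))
    have hβlt : F (x (μ.ord * (t + 1))) η < f (x (μ.ord * (t + 1))) + 1 := by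
      rw [Ordinal.add_one_eq_succ (f (x (μ.ord * (t + 1)))), Order.lt_succ_iff]; exact hile
    obtain ⟨α, hα, hEα⟩ := hE _ hiκ _ hβlt
    have hslt : μ.ord * t + α < μ.ord * (t + 1) := by
      rw [Ordinal.add_one_eq_succ, Ordinal.mul_succ]
      exact (add_lt_add_iff_left _).mpr hα
    have hsκ : μ.ord * t + α < κ.ord := hslt.trans (hmul t ht)
    have hdm := div_mod_unique (t := t) hμ0 hα
    rw [Set.mem_iUnion₂]
    refine ⟨x (μ.ord * t + α), hxX _ hsκ, ?_⟩
    intro j hj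
    have hex : ∃ s, s < κ.ord ∧ x s = x (μ.ord * t + α) := ⟨μ.ord * t + α, hsκ, rfl⟩
    show η j = (if h : ∃ s, s < κ.ord ∧ x s = x (μ.ord * t + α) then
        V (x (μ.ord * (h.choose / μ.ord + 1)))
          (E' (x (μ.ord * (h.choose / μ.ord + 1))) (h.choose % μ.ord))
      else fun _ => false) j
    rw [dif_pos hex]
    have hchoose : hex.choose = μ.ord * t + α :=
      hxmono.injective hex.choose_spec.2
    rw [hchoose, hdm.1, hdm.2]
    have hE'eq : E' (x (μ.ord * (t + 1))) α = F (x (μ.ord * (t + 1))) η := by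
      rw [hE'def]
      show (if h : x (μ.ord * (t + 1)) < κ.ord then E _ h else id) α = _
      rw [dif_pos hiκ]
      exact hEα
    rw [hE'eq]
    have hVw : F (x (μ.ord * (t + 1))) (V (x (μ.ord * (t + 1))) (F (x (μ.ord * (t + 1))) η))
        = F (x (μ.ord * (t + 1))) η := hV _ _ ⟨η, rfl⟩
    have hagree := hF.2.2 _ hiκ _ η hVw
    exact (hagree j (hj.trans (hxmono hslt))).symm

end
end

section
/- Assume $\kappa = \kappa^{<\kappa}$ is regular uncountable and every family of at most $\gamma$ functions in ${}^{\kappa}\kappa$ is bounded with respect to $<^*_{\kappa}$ (i.e., the bounding number $\mathbf{b}$ of $({}^{\kappa}\kappa, <^*_{\kappa})$ exceeds $\gamma$), where $\kappa = \mu^+$ and injections $F_i : {}^{i}2 \to \kappa$ are fixed. Then the union of any $\gamma$-indexed family of strong measure zero subsets of ${}^{\kappa}2$ has strong measure zero. -/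
open Cardinal Set

noncomputable section

lemma mkIioOrd (κ : Cardinal.{0}) : #(Set.Iio κ.ord) = Cardinal.lift.{1} κ := by
  rw [Ordinal.mk_Iio_ordinal, Cardinal.card_ord]

/-- A subset of `Iio κ.ord` of size at most `μ` (where `κ = μ⁺ > ℵ₀`) is bounded. -/
lemma small_bdd (κ μ : Cardinal.{0}) (hμ : κ = Order.succ μ) (hκ : ℵ₀ < κ)
    (B : Set Ordinal.{0}) (hB : B ⊆ Set.Iio κ.ord) (hcard : #B ≤ Cardinal.lift.{1} μ) :
    ∃ b < κ.ord, ∀ i ∈ B, i ≤ b := by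
  have hμinf : ℵ₀ ≤ μ := by rw [hμ, Order.lt_succ_iff] at hκ; exact hκ
  have hcardle : ∀ {i : Ordinal.{0}}, i < κ.ord → i.card ≤ μ := by
    intro i hi
    have := Cardinal.lt_ord.mp hi
    rwa [hμ, Order.lt_succ_iff] at this
  rcases B.eq_empty_or_nonempty with rfl | hne
  · refine ⟨0, ?_, fun i h => h.elim⟩
    rw [Cardinal.lt_ord, Ordinal.card_zero]
    exact aleph0_pos.trans hκ
  have hbdd : BddAbove B := ⟨κ.ord, fun i hi => (hB hi).le⟩
  refine ⟨sSup B, ?_, fun i hi => le_csSup hbdd hi⟩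
  by_contra hn
  have hsup : κ.ord ≤ sSup B := le_of_not_gt hn
  have hsub : Set.Iio κ.ord ⊆ ⋃ x ∈ B, Set.Iio (x : Ordinal) := by
    intro i hi
    obtain ⟨x, hx, hix⟩ := (lt_csSup_iff hbdd hne).mp (lt_of_lt_of_le hi hsup)
    exact Set.mem_biUnion hx hix
  have h2 : Cardinal.lift.{1} κ ≤ Cardinal.lift.{1} μ := by
    calc Cardinal.lift.{1} κ = #(Set.Iio κ.ord) := (mkIioOrd κ).symm
    _ ≤ #(⋃ x ∈ B, Set.Iio (x : Ordinal)) := mk_le_mk_of_subset hsub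
    _ ≤ #B * ⨆ x : B, #(Set.Iio (x : Ordinal)) := mk_biUnion_le _ _
    _ ≤ #B * Cardinal.lift.{1} μ := by
        refine mul_le_mul_right (ciSup_le' fun x => ?_) _
        rw [Ordinal.mk_Iio_ordinal]
        exact Cardinal.lift_le.mpr (hcardle (hB x.2))
    _ ≤ Cardinal.lift.{1} μ * Cardinal.lift.{1} μ := mul_le_mul_left hcard _
    _ = Cardinal.lift.{1} μ := Cardinal.mul_eq_self (Cardinal.aleph0_le_lift.mpr hμinf)
  have h3 : κ ≤ μ := Cardinal.lift_le.mp h2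
  rw [hμ] at h3
  exact absurd h3 (not_le.mpr (Order.lt_succ μ))

/-- A tail interval of `Iio κ.ord` has size `κ`. -/
lemma mkIco (κ : Cardinal.{0}) (hκ : ℵ₀ < κ) (β : Ordinal.{0}) (hβ : β < κ.ord) :
    #(Set.Ico β κ.ord) = Cardinal.lift.{1} κ := by
  refine le_antisymm ((mk_le_mk_of_subset fun i hi => hi.2).trans_eq (mkIioOrd κ)) ?_
  by_contra hlt
  push_neg at hlt
  have hsub : Set.Iio κ.ord ⊆ Set.Iio β ∪ Set.Ico β κ.ord := by
    intro i hi
    rcases lt_or_ge i β with h | h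
    · exact Or.inl h
    · exact Or.inr ⟨h, hi⟩
  have h1 : Cardinal.lift.{1} κ ≤ #(Set.Iio β) + #(Set.Ico β κ.ord) :=
    ((mkIioOrd κ).symm.trans_le ((mk_le_mk_of_subset hsub).trans (mk_union_le _ _)))
  have hIi : #(Set.Iio β) < Cardinal.lift.{1} κ := by
    rw [Ordinal.mk_Iio_ordinal]
    exact Cardinal.lift_lt.mpr (Cardinal.lt_ord.mp hβ)
  exact absurd h1 (not_le.mpr (Cardinal.add_lt_of_lt (Cardinal.aleph0_le_lift.mpr hκ.le) hIi hlt))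

/-- if `κ = μ⁺ = κ^{<κ}` and every family of at most `γ` functions
in `^κκ` is `<*`-bounded (i.e. `𝐛 > γ`), then the union of any `γ`-indexed
family of strong measure zero subsets of `^κ2` has strong measure zero. -/
theorem smz_additivity_of_bounding (κ μ γ : Cardinal.{0}) (hμ : κ = Order.succ μ)
    (hκ : ℵ₀ < κ) (hpow : κ ^< κ = κ)
    (F : Ordinal.{0} → (Ordinal.{0} → Bool) → Ordinal.{0}) (hF : CodingOK κ F)
    (hb : ∀ G : Set (Ordinal.{0} → Ordinal.{0}), (∀ f ∈ G, IntoKappa κ f) →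
      #G ≤ Cardinal.lift.{1} γ → BoundedFam κ G)
    (A : Ordinal.{0} → Set (Ordinal.{0} → Bool)) (hA : ∀ ξ < γ.ord, SMZ κ (A ξ)) :
    SMZ κ (⋃ ξ ∈ Set.Iio γ.ord, A ξ) := by
  intro X hX hXc
  -- basic facts
  have hκinf : ℵ₀ ≤ κ := hκ.le
  have hμinf : ℵ₀ ≤ μ := by rw [hμ, Order.lt_succ_iff] at hκ; exact hκ
  have hlim : Order.IsSuccLimit κ.ord := Cardinal.isSuccLimit_ord hκinf
  have hcardle : ∀ {i : Ordinal.{0}}, i < κ.ord → i.card ≤ μ := by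
    intro i hi
    have := Cardinal.lt_ord.mp hi
    rwa [hμ, Order.lt_succ_iff] at this
  have hm0 : (0 : Ordinal.{0}) < μ.ord := by
    rw [Cardinal.lt_ord, Ordinal.card_zero]
    exact aleph0_pos.trans_le hμinf
  have hm1 : (1 : Ordinal.{0}) ≤ μ.ord := Order.one_le_iff_pos.mpr hm0
  -- the enumeration of X (padded by a final segment of the ordinals)
  set S : Set Ordinal.{0} := X ∪ Set.Ici κ.ord with hS
  have hSu : ¬ BddAbove S := by
    rintro ⟨b, hb⟩
    have h1 : Order.succ (max b κ.ord) ∈ S :=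
      Or.inr (Set.mem_Ici.mpr (le_trans (le_max_right _ _) (Order.le_succ _)))
    exact absurd ((hb h1).trans (le_max_left b κ.ord)) (not_le.mpr (Order.lt_succ _))
  set e : Ordinal.{0} → Ordinal.{0} := Ordinal.enumOrd S with he
  have hemono : StrictMono e := Ordinal.enumOrd_strictMono hSu
  have heX : ∀ {α : Ordinal.{0}}, α < κ.ord → e α ∈ X := by
    intro α hα
    rcases Ordinal.enumOrd_mem hSu α with h | h
    · exact h
    · exfalso
      have hXsub : X ⊆ e '' Set.Iio α := by
        intro x hx
        have hxS : x ∈ Set.range e := by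
          rw [Ordinal.range_enumOrd hSu]; exact Or.inl hx
        obtain ⟨b, rfl⟩ := hxS
        exact ⟨b, hemono.lt_iff_lt.mp ((hX hx).trans_le h), rfl⟩
      have h1 : Cardinal.lift.{1} κ ≤ #(Set.Iio α) := by
        rw [← hXc]
        exact (mk_le_mk_of_subset hXsub).trans mk_image_le
      rw [Ordinal.mk_Iio_ordinal] at h1
      exact absurd (Cardinal.lift_le.mp h1) (not_le.mpr (Cardinal.lt_ord.mp hα))
  -- the sparse subsequence y
  set y : Ordinal.{0} → Ordinal.{0} := fun α => e (μ.ord * (α + 1)) with hy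
  have hidx : ∀ {α : Ordinal.{0}}, α < κ.ord → μ.ord * (α + 1) < κ.ord := by
    intro α hα
    rw [Cardinal.lt_ord, Ordinal.card_mul, Cardinal.card_ord]
    have h1 : (α + 1).card ≤ μ :=
      hcardle (by rw [Ordinal.add_one_eq_succ]; exact hlim.succ_lt hα)
    calc μ * (α + 1).card ≤ μ * μ := mul_le_mul_right h1 _
    _ = μ := Cardinal.mul_eq_self hμinf
    _ < κ := by rw [hμ]; exact Order.lt_succ μ
  have hyX : ∀ {α : Ordinal.{0}}, α < κ.ord → y α ∈ X := fun hα => heX (hidx hα)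
  have hyk : ∀ {α : Ordinal.{0}}, α < κ.ord → y α < κ.ord := fun hα => hX (hyX hα)
  have hyge : ∀ α : Ordinal.{0}, α ≤ y α := by
    intro α
    have h1 : α ≤ μ.ord * (α + 1) := by
      calc α ≤ α + 1 := le_self_add
      _ = 1 * (α + 1) := (one_mul _).symm
      _ ≤ μ.ord * (α + 1) := mul_le_mul_left hm1 _
    exact h1.trans hemono.le_apply
  have hymono : StrictMono y := by
    intro a b hab
    apply hemono
    rw [mul_lt_mul_iff_right₀ hm0, Ordinal.add_one_eq_succ, Ordinal.add_one_eq_succ]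
    exact Order.succ_lt_succ hab
  -- covers of each A α using the tails of the range of y
  have hcovex : ∀ α β : Ordinal.{0}, ∃ P : Ordinal.{0} → (Ordinal.{0} → Bool),
      α < γ.ord → β < κ.ord → A α ⊆ ⋃ ξ ∈ y '' Set.Ico β κ.ord, cyl ξ (P ξ) := by
    intro α β
    by_cases h : α < γ.ord ∧ β < κ.ord
    · have hsub : y '' Set.Ico β κ.ord ⊆ Set.Iio κ.ord := by
        rintro _ ⟨δ, hδ, rfl⟩; exact hyk hδ.2
      have hc : #(y '' Set.Ico β κ.ord) = Cardinal.lift.{1} κ := by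
        rw [Cardinal.mk_image_eq_of_injOn _ _ hymono.injective.injOn]
        exact mkIco κ hκ β h.2
      obtain ⟨P, hP⟩ := hA α h.1 _ hsub hc
      exact ⟨P, fun _ _ => hP⟩
    · exact ⟨fun _ _ => false, fun h1 h2 => absurd ⟨h1, h2⟩ h⟩
  choose Pat hPat using hcovex
  -- the functions f_α dominating the codes of all the covers
  have hfex : ∀ α : Ordinal.{0}, ∃ f : Ordinal.{0} → Ordinal.{0}, IntoKappa κ f ∧
      ∀ i < κ.ord, ∀ β ≤ i, F i (Pat α β i) ≤ f i := by
    intro α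
    have h1 : ∀ i : Ordinal.{0}, i < κ.ord → ∃ b < κ.ord, ∀ β ≤ i, F i (Pat α β i) ≤ b := by
      intro i hi
      obtain ⟨b, hb1, hb2⟩ := small_bdd κ μ hμ hκ ((fun β => F i (Pat α β i)) '' Set.Iic i)
        (by rintro _ ⟨β, hβ, rfl⟩; exact hF.1 i hi _)
        (by
          have hsub2 : Set.Iic i ⊆ Set.Iio (i + 1) := fun j hj =>
            Set.mem_Iio.mpr ((Set.mem_Iic.mp hj).trans_lt
              (by rw [Ordinal.add_one_eq_succ]; exact Order.lt_succ i))
          refine mk_image_le.trans ((mk_le_mk_of_subset hsub2).trans ?_)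
          rw [Ordinal.mk_Iio_ordinal]
          exact Cardinal.lift_le.mpr (hcardle
            (by rw [Ordinal.add_one_eq_succ]; exact hlim.succ_lt hi)))
      exact ⟨b, hb1, fun β hβ => hb2 _ ⟨β, hβ, rfl⟩⟩
    choose b hb1 hb2 using h1
    refine ⟨fun i => if h : i < κ.ord then b i h else 0, ?_, ?_⟩
    · intro i hi; simp only [dif_pos hi]; exact hb1 i hi
    · intro i hi β hβ; simp only [dif_pos hi]; exact hb2 i hi β hβ
  choose fa hfaK hfaB using hfex
  -- a single bounding function g
  obtain ⟨g, hgK, hgB⟩ := hb (fa '' Set.Iio γ.ord)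
    (by rintro _ ⟨α, _, rfl⟩; exact hfaK α)
    (by
      refine mk_image_le.trans ?_
      rw [Ordinal.mk_Iio_ordinal, Cardinal.card_ord])
  -- a bound for the bad set of each α
  have hbadex : ∀ α : Ordinal.{0}, ∃ b : Ordinal.{0}, α < γ.ord →
      b < κ.ord ∧ ∀ i < κ.ord, b < i → fa α i < g i := by
    intro α
    by_cases hα : α < γ.ord
    · have hls := hgB (fa α) ⟨α, hα, rfl⟩
      have hcard : #{i : Ordinal.{0} | i ∈ Set.Iio κ.ord ∧ g i ≤ fa α i}
          ≤ Cardinal.lift.{1} μ := by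
        have h2 : #{i : Ordinal.{0} | i ∈ Set.Iio κ.ord ∧ g i ≤ fa α i}
            < Order.succ (Cardinal.lift.{1} μ) := by
          rw [← Cardinal.lift_succ, ← hμ]
          exact hls
        exact Order.lt_succ_iff.mp h2
      obtain ⟨b, hb1, hb2⟩ := small_bdd κ μ hμ hκ _ (fun i h => h.1) hcard
      exact ⟨b, fun _ => ⟨hb1, fun i hik hbi =>
        lt_of_not_ge fun hle => absurd (hb2 i ⟨hik, hle⟩) (not_le.mpr hbi)⟩⟩
    · exact ⟨0, fun h => absurd h hα⟩
  choose bnd hbnd using hbadex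
  -- the slot functions
  have hslotex : ∀ α : Ordinal.{0}, ∃ s : Ordinal.{0} → Ordinal.{0}, α < κ.ord →
      (∀ j < g (y α), s j ∈ X ∧ s j < y α ∧ ∃ c < μ.ord, s j = e (μ.ord * α + c)) ∧
      Set.InjOn s (Set.Iio (g (y α))) := by
    intro α
    by_cases hα : α < κ.ord
    · have hgy : g (y α) < κ.ord := hgK _ (hyk hα)
      have hle : #(Set.Iio (g (y α))) ≤ #(Set.Iio μ.ord) := by
        rw [Ordinal.mk_Iio_ordinal, Ordinal.mk_Iio_ordinal, Cardinal.card_ord]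
        exact Cardinal.lift_le.mpr (hcardle hgy)
      obtain ⟨emb⟩ := (Cardinal.le_def _ _).mp hle
      refine ⟨fun j => if h : j < g (y α) then e (μ.ord * α + (emb ⟨j, h⟩).1) else 0,
        fun _ => ⟨?_, ?_⟩⟩
      · intro j hj
        simp only [dif_pos hj]
        have hc : ((emb ⟨j, hj⟩).1 : Ordinal) < μ.ord := (emb ⟨j, hj⟩).2
        have hidx2 : μ.ord * α + (emb ⟨j, hj⟩).1 < μ.ord * (α + 1) := by
          rw [Ordinal.add_one_eq_succ, Ordinal.mul_succ]
          exact add_lt_add_right hc _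
        have hidx3 : μ.ord * α + (emb ⟨j, hj⟩).1 < κ.ord := hidx2.trans (hidx hα)
        exact ⟨heX hidx3, hemono hidx2, ⟨_, hc, rfl⟩⟩
      · intro j hj j' hj' hjj
        rw [Set.mem_Iio] at hj hj'
        simp only [dif_pos hj, dif_pos hj'] at hjj
        have h1 := hemono.injective hjj
        have h2 := add_left_cancel_iff.mp h1
        exact congrArg Subtype.val (emb.injective (Subtype.ext h2))
    · exact ⟨fun _ => 0, fun h => absurd h hα⟩
  choose sl hsl using hslotex
  -- the slots are globally injective
  have huniq : ∀ α α' j j' : Ordinal.{0}, α < κ.ord → α' < κ.ord → j < g (y α) →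
      j' < g (y α') → sl α j = sl α' j' → α = α' ∧ j = j' := by
    intro α α' j j' hα hα' hj hj' heq
    obtain ⟨c, hc, hcE⟩ := ((hsl α hα).1 j hj).2.2
    obtain ⟨c', hc', hcE'⟩ := ((hsl α' hα').1 j' hj').2.2
    have h2 : μ.ord * α + c = μ.ord * α' + c' :=
      hemono.injective (by rw [← hcE, ← hcE', heq])
    have key : ∀ a a' d d' : Ordinal.{0}, d < μ.ord →
        μ.ord * a + d = μ.ord * a' + d' → ¬a < a' := by
      intro a a' d d' hd hEq hlt'
      have hstrict : μ.ord * a + d < μ.ord * a' + d' := by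
        calc μ.ord * a + d < μ.ord * a + μ.ord := add_lt_add_right hd _
        _ = μ.ord * (a + 1) := by rw [Ordinal.add_one_eq_succ, Ordinal.mul_succ]
        _ ≤ μ.ord * a' := mul_le_mul_right
            (by rw [Ordinal.add_one_eq_succ]; exact Order.succ_le_of_lt hlt') _
        _ ≤ μ.ord * a' + d' := le_self_add
      exact absurd hEq (ne_of_lt hstrict)
    have hαα : α = α' := by
      rcases lt_trichotomy α α' with h | h | h
      · exact absurd h (key α α' c c' hc h2)
      · exact h
      · exact absurd h (key α' α c' c hc' h2.symm)
    subst hαα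
    exact ⟨rfl, (hsl α hα).2 hj hj' heq⟩
  -- the final cover
  have hfcex : ∀ ξ : Ordinal.{0}, ∃ ν₀ : Ordinal.{0} → Bool,
      ∀ α j : Ordinal.{0}, α < κ.ord → j < g (y α) → sl α j = ξ →
        (∃ ν : Ordinal.{0} → Bool, F (y α) ν = j) → F (y α) ν₀ = j := by
    intro ξ
    by_cases h : ∃ α j : Ordinal.{0}, ∃ ν : Ordinal.{0} → Bool,
        α < κ.ord ∧ j < g (y α) ∧ sl α j = ξ ∧ F (y α) ν = j
    · obtain ⟨α₀, j₀, ν₀, hα₀, hj₀, hs₀, hF₀⟩ := h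
      refine ⟨ν₀, fun α j hα hj hslj _ => ?_⟩
      obtain ⟨h1, h2⟩ := huniq α α₀ j j₀ hα hα₀ hj hj₀ (hslj.trans hs₀.symm)
      rw [h1, h2]
      exact hF₀
    · refine ⟨fun _ => false, fun α j hα hj hslj hex => ?_⟩
      obtain ⟨ν, hν⟩ := hex
      exact absurd ⟨α, j, ν, hα, hj, hslj, hν⟩ h
  choose fc hfc using hfcex
  -- verification
  refine ⟨fc, ?_⟩
  intro η hη
  rw [Set.mem_iUnion₂] at hη
  obtain ⟨α, hα, hηA⟩ := hη
  rw [Set.mem_Iio] at hα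
  obtain ⟨hbnd1, hbnd2⟩ := hbnd α hα
  have hβ : bnd α + 1 < κ.ord := by
    rw [Ordinal.add_one_eq_succ]; exact hlim.succ_lt hbnd1
  have hcov := hPat α (bnd α + 1) hα hβ hηA
  rw [Set.mem_iUnion₂] at hcov
  obtain ⟨ξ, hξmem, hηc⟩ := hcov
  obtain ⟨δ, hδ, rfl⟩ := hξmem
  have hδκ : δ < κ.ord := hδ.2
  have hyδ : y δ < κ.ord := hyk hδκ
  have hβδ : bnd α + 1 ≤ δ := hδ.1
  have hF1 : F (y δ) η = F (y δ) (Pat α (bnd α + 1) (y δ)) :=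
    hF.2.1 _ _ _ (fun k hk => hηc k hk)
  have hle2 : F (y δ) η ≤ fa α (y δ) := by
    rw [hF1]
    exact hfaB α (y δ) hyδ (bnd α + 1) (hβδ.trans (hyge δ))
  have hbndlt : bnd α < y δ := by
    have h1 : bnd α < bnd α + 1 := by
      rw [Ordinal.add_one_eq_succ]; exact Order.lt_succ _
    exact h1.trans_le (hβδ.trans (hyge δ))
  have hlt2 : fa α (y δ) < g (y δ) := hbnd2 (y δ) hyδ hbndlt
  have hj : F (y δ) η < g (y δ) := hle2.trans_lt hlt2
  obtain ⟨hsX, hsy, -⟩ := (hsl δ hδκ).1 (F (y δ) η) hj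
  rw [Set.mem_iUnion₂]
  refine ⟨sl δ (F (y δ) η), hsX, ?_⟩
  have hν₀ : F (y δ) (fc (sl δ (F (y δ) η))) = F (y δ) η :=
    hfc _ δ (F (y δ) η) hδκ hj rfl ⟨η, rfl⟩
  have hagree := hF.2.2 (y δ) hyδ _ _ hν₀
  intro k hk
  exact (hagree k (hk.trans hsy)).symm

end
end
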